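/- Let Φ be the transition matrix of a system with nonuniform bounded growth: ‖Φ(t,τ)‖ ≤ K₀ e^{η|τ|} e^{a|t-τ|} for all t,τ, with K₀ > 0, a > 0, η > 0. Then for every t and σ > 0, ζ₁(σ) e^{-2η|t|} I ≤ ∫_t^{t+σ} Φ(s,t)ᵀ Φ(s,t) ds ≤ ζ₂(σ) e^{2η|t|} I in the ordering of symmetric matrices, where ζ₁(σ) = (1 - e^{-2(a+η)σ})/(2K₀²(a+η)) and ζ₂(σ) = K₀²(e^{2aσ} - 1)/(2a). -/

import Mathlib

open scoped Matrix.Norms.L2Operator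
open Matrix Real intervalIntegral

private lemma gb_expint (k t σ : ℝ) (hk : k ≠ 0) :
    ∫ s in t..(t+σ), exp (k*(s-t)) = (exp (k*σ) - 1)/k := by
  rw [intervalIntegral.integral_comp_sub_right (fun u => exp (k*u)) t]
  simp only [sub_self, add_sub_cancel_left]
  rw [intervalIntegral.integral_comp_mul_left (fun u => exp u) hk, integral_exp,
    mul_zero, Real.exp_zero, smul_eq_mul]
  field_simp

private lemma gb_quad {n : ℕ} (A : Matrix (Fin n) (Fin n) ℝ) (x : Fin n → ℝ) :
    x ⬝ᵥ (Aᵀ * A) *ᵥ x = (A *ᵥ x) ⬝ᵥ (A *ᵥ x) := by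
  rw [← mulVec_mulVec, dotProduct_mulVec, vecMul_transpose]

private lemma gb_dot_nonneg {n : ℕ} (v : Fin n → ℝ) : 0 ≤ v ⬝ᵥ v :=
  Finset.sum_nonneg fun _ _ => mul_self_nonneg _

private lemma gb_opbound {n : ℕ} (A : Matrix (Fin n) (Fin n) ℝ) (x : Fin n → ℝ) :
    (A *ᵥ x) ⬝ᵥ (A *ᵥ x) ≤ ‖A‖^2 * (x ⬝ᵥ x) := by
  have h1 : ∀ v : Fin n → ℝ, ‖(EuclideanSpace.equiv (Fin n) ℝ).symm v‖ ^ 2 = v ⬝ᵥ v := by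
    intro v
    rw [EuclideanSpace.norm_eq, Real.sq_sqrt (by positivity)]
    simp [dotProduct, sq]
  have h2 := A.l2_opNorm_mulVec ((EuclideanSpace.equiv (Fin n) ℝ).symm x)
  have h3 : A *ᵥ ((EuclideanSpace.equiv (Fin n) ℝ).symm x) = A *ᵥ x := rfl
  rw [h3] at h2
  calc (A *ᵥ x) ⬝ᵥ (A *ᵥ x) = ‖(EuclideanSpace.equiv (Fin n) ℝ).symm (A *ᵥ x)‖ ^ 2 := (h1 _).symm
    _ ≤ (‖A‖ * ‖(EuclideanSpace.equiv (Fin n) ℝ).symm x‖)^2 :=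
        pow_le_pow_left₀ (norm_nonneg _) h2 2
    _ = ‖A‖^2 * (x ⬝ᵥ x) := by rw [mul_pow, h1]

private lemma gb_sq_exp (K u v : ℝ) :
    (K * exp u * exp v)^2 = K^2 * exp (2*u) * exp (2*v) := by
  rw [mul_pow, mul_pow, sq (exp u), sq (exp v), ← Real.exp_add, ← Real.exp_add]
  ring_nf

theorem gramian_growth_bounds {n : ℕ}
    (Φ : ℝ → ℝ → Matrix (Fin n) (Fin n) ℝ)
    (hΦid : ∀ t, Φ t t = 1)
    (hΦcocycle : ∀ a b c, Φ a b * Φ b c = Φ a c)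
    (hΦcont : Continuous fun p : ℝ × ℝ => Φ p.1 p.2)
    (K₀ a η : ℝ) (hK₀ : 0 < K₀) (ha : 0 < a) (hη : 0 < η)
    (hgrowth : ∀ t τ : ℝ, ‖Φ t τ‖ ≤ K₀ * exp (η * |τ|) * exp (a * |t - τ|)) :
    ∀ t σ : ℝ, 0 < σ →
      ((∫ s in t..(t + σ), (Φ s t)ᵀ * Φ s t) -
          (((1 - exp (-2 * (a + η) * σ)) / (2 * K₀ ^ 2 * (a + η))) * exp (-2 * η * |t|)) •
            (1 : Matrix (Fin n) (Fin n) ℝ)).PosSemidef ∧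
      (((K₀ ^ 2 * (exp (2 * a * σ) - 1) / (2 * a)) * exp (2 * η * |t|)) •
          (1 : Matrix (Fin n) (Fin n) ℝ) -
          (∫ s in t..(t + σ), (Φ s t)ᵀ * Φ s t)).PosSemidef := by
  intro t σ hσ
  have hK₀' : K₀ ≠ 0 := ne_of_gt hK₀
  have hcΦ : Continuous fun s : ℝ => Φ s t :=
    hΦcont.comp (continuous_id.prodMk continuous_const)
  have hcM : Continuous fun s : ℝ => (Φ s t)ᵀ * Φ s t := hcΦ.matrix_transpose.matrix_mul hcΦ
  have hInt : IntervalIntegrable (fun s => (Φ s t)ᵀ * Φ s t) MeasureTheory.volume t (t+σ) :=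
    hcM.intervalIntegrable t (t+σ)
  set G : Matrix (Fin n) (Fin n) ℝ := ∫ s in t..(t + σ), (Φ s t)ᵀ * Φ s t with hGdef
  -- Hermitian
  have hGherm : G.IsHermitian := by
    let L : Matrix (Fin n) (Fin n) ℝ →ₗ[ℝ] Matrix (Fin n) (Fin n) ℝ :=
      { toFun := fun M => Mᴴ
        map_add' := fun M N => conjTranspose_add M N
        map_smul' := fun c M => by simp }
    have h := (LinearMap.toContinuousLinearMap L).intervalIntegral_comp_comm hInt
    have h2 : Gᴴ = ∫ s in t..(t+σ), ((Φ s t)ᵀ * Φ s t)ᴴ := h.symm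
    rw [Matrix.IsHermitian, h2]
    congr 1
    funext s
    simp [conjTranspose_eq_transpose_of_trivial, transpose_mul]
  have hone : ∀ c : ℝ, (c • (1 : Matrix (Fin n) (Fin n) ℝ)).IsHermitian := by
    intro c
    rw [Matrix.IsHermitian, conjTranspose_smul]
    simp [conjTranspose_eq_transpose_of_trivial]
  -- quadratic form swap
  have hswap : ∀ x : Fin n → ℝ,
      x ⬝ᵥ G *ᵥ x = ∫ s in t..(t+σ), x ⬝ᵥ ((Φ s t)ᵀ * Φ s t) *ᵥ x := by
    intro x
    let L : Matrix (Fin n) (Fin n) ℝ →ₗ[ℝ] ℝ :=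
      { toFun := fun M => x ⬝ᵥ M *ᵥ x
        map_add' := fun M N => by simp [Matrix.add_mulVec, dotProduct_add]
        map_smul' := fun c M => by simp [Matrix.smul_mulVec] }
    exact ((LinearMap.toContinuousLinearMap L).intervalIntegral_comp_comm hInt).symm
  have hgc : ∀ x : Fin n → ℝ, Continuous fun s => x ⬝ᵥ ((Φ s t)ᵀ * Φ s t) *ᵥ x := by
    intro x
    exact continuous_const.dotProduct (hcM.matrix_mulVec continuous_const)
  have hd : (0:ℝ) < a + η := by linarith
  constructor
  · -- lower bound
    refine PosSemidef.of_dotProduct_mulVec_nonneg (hGherm.sub (hone _)) fun x => ?_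
    rw [star_trivial, Matrix.sub_mulVec, dotProduct_sub, Matrix.smul_mulVec,
      Matrix.one_mulVec, dotProduct_smul, sub_nonneg, smul_eq_mul]
    rw [hswap]
    set C : ℝ := 1/K₀^2 * exp (-2*η*|t|) * (x ⬝ᵥ x) with hC
    have hℓc : Continuous fun s : ℝ => C * exp (-2*(a+η)*(s-t)) := by
      exact continuous_const.mul (Real.continuous_exp.comp (by continuity))
    have hpt : ∀ s ∈ Set.Icc t (t+σ),
        C * exp (-2*(a+η)*(s-t)) ≤ x ⬝ᵥ ((Φ s t)ᵀ * Φ s t) *ᵥ x := by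
      intro s hs
      obtain ⟨hs1, hs2⟩ := hs
      set c : ℝ := K₀ * exp (η*|t|) * exp ((a+η)*(s-t)) with hc
      have hcpos : 0 < c := by positivity
      have hBts : ‖Φ t s‖ ≤ c := by
        have h1 : |t - s| = s - t := by
          rw [abs_sub_comm]; exact abs_of_nonneg (by linarith)
        have h2 : exp (η*|s|) ≤ exp (η*|t|) * exp (η*(s-t)) := by
          rw [← Real.exp_add]
          apply Real.exp_le_exp.2
          have h3 := abs_sub_abs_le_abs_sub s t
          rw [abs_of_nonneg (by linarith : (0:ℝ) ≤ s - t)] at h3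
          nlinarith [hη.le]
        calc ‖Φ t s‖ ≤ K₀ * exp (η*|s|) * exp (a*|t-s|) := hgrowth t s
          _ ≤ K₀ * (exp (η*|t|) * exp (η*(s-t))) * exp (a*(s-t)) := by
              rw [h1]
              exact mul_le_mul_of_nonneg_right
                (mul_le_mul_of_nonneg_left h2 hK₀.le) (exp_nonneg _)
          _ = c := by
              rw [hc, show (a+η)*(s-t) = η*(s-t) + a*(s-t) by ring, Real.exp_add]; ring
      have hxid : Φ t s *ᵥ (Φ s t *ᵥ x) = x := by
        rw [mulVec_mulVec, hΦcocycle, hΦid, Matrix.one_mulVec]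
      have hx : x ⬝ᵥ x ≤ c^2 * ((Φ s t *ᵥ x) ⬝ᵥ (Φ s t *ᵥ x)) := by
        calc x ⬝ᵥ x = (Φ t s *ᵥ (Φ s t *ᵥ x)) ⬝ᵥ (Φ t s *ᵥ (Φ s t *ᵥ x)) := by rw [hxid]
          _ ≤ ‖Φ t s‖^2 * ((Φ s t *ᵥ x) ⬝ᵥ (Φ s t *ᵥ x)) := gb_opbound _ _
          _ ≤ c^2 * ((Φ s t *ᵥ x) ⬝ᵥ (Φ s t *ᵥ x)) :=
              mul_le_mul_of_nonneg_right
                (pow_le_pow_left₀ (norm_nonneg _) hBts 2) (gb_dot_nonneg _)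
      rw [gb_quad]
      rw [← mul_le_mul_iff_of_pos_right (pow_pos hcpos 2)]
      have hc2 : (C * exp (-2*(a+η)*(s-t))) * c^2 = x ⬝ᵥ x := by
        rw [hc, gb_sq_exp, hC,
          show -2*η*|t| = -(2*(η*|t|)) by ring,
          show -2*(a+η)*(s-t) = -(2*((a+η)*(s-t))) by ring,
          Real.exp_neg, Real.exp_neg]
        field_simp
      rw [hc2]
      linarith [hx]
    have hmono := intervalIntegral.integral_mono_on (μ := MeasureTheory.volume) (by linarith : t ≤ t + σ)
      (hℓc.intervalIntegrable t (t+σ)) ((hgc x).intervalIntegrable t (t+σ)) hpt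
    have hval : ∫ s in t..(t+σ), C * exp (-2*(a+η)*(s-t))
        = (1 - exp (-2 * (a + η) * σ)) / (2 * K₀ ^ 2 * (a + η)) * exp (-2 * η * |t|) * (x ⬝ᵥ x) := by
      rw [intervalIntegral.integral_const_mul, gb_expint _ _ _ (show (-2*(a+η)) ≠ 0 by nlinarith)]
      rw [hC]
      field_simp
      ring
    rw [← hval]
    exact hmono
  · -- upper bound
    refine PosSemidef.of_dotProduct_mulVec_nonneg ((hone _).sub hGherm) fun x => ?_
    rw [star_trivial, Matrix.sub_mulVec, dotProduct_sub, Matrix.smul_mulVec,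
      Matrix.one_mulVec, dotProduct_smul, sub_nonneg, smul_eq_mul]
    rw [hswap]
    set C : ℝ := K₀^2 * exp (2*η*|t|) * (x ⬝ᵥ x) with hC
    have hℓc : Continuous fun s : ℝ => C * exp (2*a*(s-t)) := by
      exact continuous_const.mul (Real.continuous_exp.comp (by continuity))
    have hpt : ∀ s ∈ Set.Icc t (t+σ),
        x ⬝ᵥ ((Φ s t)ᵀ * Φ s t) *ᵥ x ≤ C * exp (2*a*(s-t)) := by
      intro s hs
      obtain ⟨hs1, hs2⟩ := hs
      have h1 : |s - t| = s - t := abs_of_nonneg (by linarith)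
      have hB : ‖Φ s t‖ ≤ K₀ * exp (η*|t|) * exp (a*(s-t)) := by
        have := hgrowth s t
        rwa [h1] at this
      rw [gb_quad]
      calc (Φ s t *ᵥ x) ⬝ᵥ (Φ s t *ᵥ x) ≤ ‖Φ s t‖^2 * (x ⬝ᵥ x) := gb_opbound _ _
        _ ≤ (K₀ * exp (η*|t|) * exp (a*(s-t)))^2 * (x ⬝ᵥ x) :=
            mul_le_mul_of_nonneg_right
              (pow_le_pow_left₀ (norm_nonneg _) hB 2) (gb_dot_nonneg _)
        _ = C * exp (2*a*(s-t)) := by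
            rw [gb_sq_exp, hC]
            ring_nf
    have hmono := intervalIntegral.integral_mono_on (μ := MeasureTheory.volume) (by linarith : t ≤ t + σ)
      ((hgc x).intervalIntegrable t (t+σ)) (hℓc.intervalIntegrable t (t+σ)) hpt
    have hval : ∫ s in t..(t+σ), C * exp (2*a*(s-t))
        = K₀ ^ 2 * (exp (2 * a * σ) - 1) / (2 * a) * exp (2 * η * |t|) * (x ⬝ᵥ x) := by
      rw [intervalIntegral.integral_const_mul, gb_expint _ _ _ (show (2*a) ≠ 0 by positivity)]
      rw [hC]
      field_simp
    rw [← hval]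
    exact hmono
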